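/- Let H be a real Hilbert space, A : H → H a continuous self-adjoint nonnegative linear operator, 0 ≤ p ≤ 1, γ ≥ 1, u₀, u₁ ∈ H with ⟨Au₀,u₀⟩ > 0, and K₀, K₁ > 0 constants. Then there exists ε₀ > 0 (depending only on γ, p, K₀, K₁ and the data u₀, u₁) with the following property: if ε ∈ (0,ε₀], S > 0, and u : [0,S) → H is a C² solution of ε u''(t) + (1+t)^{-p} u'(t) + ⟨Au(t),u(t)⟩^γ A u(t) = 0 with u(0) = u₀, u'(0) = u₁, such that for all t ∈ [0,S): ⟨Au(t),u(t)⟩ > 0, |⟨u'(t), Au(t)⟩|/⟨Au(t),u(t)⟩ ≤ K₀/(1+t), and ⟨Au(t),u(t)⟩^{γ−1}|Au(t)|² ≤ K₁ (1+t)^{−(p+1)}, then for all t ∈ [0,S): |u'(t)|² (1+t)^{1−p} / ⟨Au(t),u(t)⟩^{γ+1} ≤ max{ 4K₁ , |u₁|²/⟨Au₀,u₀⟩^{γ+1} }. -/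

import Mathlib

set_option maxHeartbeats 1000000


set_option maxHeartbeats 1000000 in
/-- Core arithmetic inequality: the numerator of `Q'` is negative at a point
where `Q = M ≥ 4K₁`, provided `ε` is small. -/
lemma key_neg {ε K₀ K₁ M τ s a G P E W nu nA c1 c2 T ip : ℝ}
    (hτ1 : 1 ≤ τ) (hs0 : 0 < s) (hτs1 : 1 ≤ τ * s)
    (ha : 0 < a) (hG : 0 < G) (hP : 0 < P) (hGP : G * a = P)
    (hT : T = τ * s)
    (hε : 0 < ε) (hK1 : 0 < K₁) (hM : 4 * K₁ ≤ M)
    (hc1 : 0 ≤ c1) (hc2 : 0 ≤ c2) (hK0 : 0 ≤ K₀)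
    (hE : E = nu ^ 2) (hnu : 0 ≤ nu) (hnA : 0 ≤ nA)
    (hW : |W| ≤ nA * nu)
    (hWτ : |W| * τ ≤ K₀ * a)
    (hA2 : (G / a) * nA ^ 2 ≤ K₁ * (s / τ))
    (hQ : E * (τ * s) = M * P)
    (heq : ε * ip + s * E + G * W = 0)
    (hεC : ε * (c1 + 2 * c2 * K₀ + 1) ≤ 1) :
    (2 * ip * T + E * (c1 * s)) * P - E * T * (c2 * G * (2 * W)) < 0 := by
  subst hT
  have hτ0 : (0:ℝ) < τ := lt_of_lt_of_le one_pos hτ1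
  have hM0 : 0 < M := lt_of_lt_of_le (by linarith) hM
  have hE0 : 0 ≤ E := hE ▸ sq_nonneg nu
  have habs : 0 ≤ |W| := abs_nonneg W
  -- `nA²` bound without divisions
  have hA2' : G * nA ^ 2 * τ ≤ K₁ * s * a := by
    have h := mul_le_mul_of_nonneg_left hA2 (mul_pos ha hτ0).le
    calc G * nA ^ 2 * τ = a * τ * (G / a * nA ^ 2) := by field_simp
      _ ≤ a * τ * (K₁ * (s / τ)) := h
      _ = K₁ * s * a := by field_simp
  -- Cauchy–Schwarz squared
  have hW2 : W ^ 2 ≤ nA ^ 2 * E := by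
    have h1 : |W| * |W| ≤ (nA * nu) * (nA * nu) :=
      mul_le_mul hW hW habs (mul_nonneg hnA hnu)
    have h2 : |W| * |W| = W ^ 2 := by rw [← abs_mul, abs_mul_self]; ring
    rw [hE]; linarith [h1, h2]
  -- squared bound on the dominant cross term
  have hsq : (τ * G * |W|) ^ 2 ≤ (M / 2 * P) ^ 2 := by
    have hGτE : 0 ≤ G * τ * E := mul_nonneg (mul_nonneg hG.le hτ0.le) hE0
    have step1 : τ ^ 2 * G ^ 2 * W ^ 2 ≤ τ ^ 2 * G ^ 2 * (nA ^ 2 * E) :=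
      mul_le_mul_of_nonneg_left hW2 (by positivity)
    have step3 : (G * nA ^ 2 * τ) * (G * τ * E) ≤ (K₁ * s * a) * (G * τ * E) :=
      mul_le_mul_of_nonneg_right hA2' hGτE
    have step4 : (K₁ * s * a) * (G * τ * E) = (K₁ * (G * a)) * (E * (τ * s)) := by ring
    have step5 : (K₁ * (G * a)) * (E * (τ * s)) = K₁ * M * P ^ 2 := by
      rw [hGP, hQ]; ring
    have step6 : K₁ * M * P ^ 2 ≤ (M / 2 * P) ^ 2 := by nlinarith [sq_nonneg P]
    have e1 : (τ * G * |W|) ^ 2 = τ ^ 2 * G ^ 2 * W ^ 2 := by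
      rw [mul_pow, mul_pow, sq_abs]
    linarith [e1, step1, step3, step4, step5, step6]
  have hB2 : τ * G * |W| ≤ M / 2 * P :=
    pow_le_pow_iff_left₀ (mul_nonneg (mul_nonneg hτ0.le hG.le) habs)
      (mul_pos (half_pos hM0) hP).le two_ne_zero |>.mp hsq
  have hnegW : τ * G * (-W) ≤ M / 2 * P := by
    have h1 : τ * G * (-W) ≤ τ * G * |W| :=
      mul_le_mul_of_nonneg_left (neg_le_abs W) (by positivity)
    linarith
  have hKP : τ * G * (-W) ≤ K₀ * P := by
    have h1 : τ * G * (-W) ≤ τ * G * |W| :=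
      mul_le_mul_of_nonneg_left (neg_le_abs W) (by positivity)
    have h2 : G * (|W| * τ) ≤ G * (K₀ * a) := mul_le_mul_of_nonneg_left hWτ hG.le
    have h3 : G * (K₀ * a) = K₀ * P := by rw [← hGP]; ring
    linarith [h1, h2]
  -- expansion of ε·τ·F using the equation
  set F := (2 * ip * (τ * s) + E * (c1 * s)) * P - E * (τ * s) * (c2 * G * (2 * W)) with hF
  have hexp : ε * τ * F
      = -(2 * τ * s * s * E * τ * P) - (2 * τ * G * W * ((τ * s) * P))
        + ε * c1 * (E * s * τ) * P - 2 * ε * c2 * G * W * E * τ * (τ * s) := by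
    rw [hF]; linear_combination (2 * τ * s * τ * P) * heq
  have t1 : 2 * τ * s * s * E * τ * P = 2 * ((τ * s) * (M * P ^ 2)) := by
    linear_combination (2 * τ * s * P) * hQ
  have t2 : -(2 * τ * G * W * ((τ * s) * P)) ≤ (τ * s) * (M * P ^ 2) := by
    have h := mul_le_mul_of_nonneg_right hnegW
      (mul_nonneg (mul_nonneg hτ0.le hs0.le) hP.le)
    linarith [h]
  have t3 : ε * c1 * (E * s * τ) * P = ε * c1 * (M * P ^ 2) := by
    linear_combination (ε * c1 * P) * hQ
  have t4 : -(2 * ε * c2 * G * W * E * τ * (τ * s)) ≤ 2 * ε * c2 * K₀ * (M * P ^ 2) := by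
    have h2 : 0 ≤ 2 * ε * c2 * (E * (τ * s)) := by
      have : 0 ≤ E * (τ * s) := mul_nonneg hE0 (by positivity)
      positivity
    have h := mul_le_mul_of_nonneg_right hKP h2
    have h4 : K₀ * P * (2 * ε * c2 * (E * (τ * s))) = 2 * ε * c2 * K₀ * (M * P ^ 2) := by
      linear_combination (2 * ε * c2 * K₀ * P) * hQ
    linarith [h, h4]
  have hMP2 : 0 < M * P ^ 2 := by positivity
  have t5 : -((τ * s) * (M * P ^ 2)) ≤ -(M * P ^ 2) := by
    linarith [mul_le_mul_of_nonneg_right hτs1 hMP2.le]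
  have t6 : ε * c1 * (M * P ^ 2) + 2 * ε * c2 * K₀ * (M * P ^ 2) ≤ (1 - ε) * (M * P ^ 2) := by
    have h : ε * c1 + 2 * ε * c2 * K₀ ≤ 1 - ε := by linarith [hεC]
    linarith [mul_le_mul_of_nonneg_right h hMP2.le]
  have hfin : ε * τ * F < 0 := by
    have hεMP : 0 < ε * (M * P ^ 2) := by positivity
    linarith [hexp, t1, t2, t3, t4, t5, t6]
  by_contra hge
  push_neg at hge
  exact absurd hfin (not_lt.2 (mul_nonneg (mul_nonneg hε.le hτ0.le) hge))

open Real
open scoped RealInnerProductSpace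

/-- A priori estimate (3.12) of Proposition 3.6: under the conditional bounds
(3.10)–(3.11) on `[0,S)`, the energy `Q_ε(t) = |u'|²(1+t)^{1-p}/⟨Au,u⟩^{γ+1}`
satisfies `Q_ε(t) ≤ max{4K₁, Q(0)}` for every `ε` small enough. -/
theorem apriori_Q_estimate
    {H : Type*} [NormedAddCommGroup H] [InnerProductSpace ℝ H]
    (A : H →L[ℝ] H)
    (hA_sa : ∀ x y : H, ⟪A x, y⟫ = ⟪x, A y⟫)
    (hA_nn : ∀ x : H, 0 ≤ ⟪A x, x⟫)
    (p γ : ℝ) (hp0 : 0 ≤ p) (hp1 : p ≤ 1) (hγ : 1 ≤ γ)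
    (u₀ u₁ : H) (hmdg : 0 < ⟪A u₀, u₀⟫)
    (K₀ K₁ : ℝ) (hK₀ : 0 < K₀) (hK₁ : 0 < K₁) :
    ∃ ε₀ > 0, ∀ ε : ℝ, 0 < ε → ε ≤ ε₀ → ∀ S : ℝ, 0 < S →
      ∀ u u' u'' : ℝ → H,
        u 0 = u₀ → u' 0 = u₁ →
        (∀ t ∈ Set.Ico (0:ℝ) S, HasDerivWithinAt u (u' t) (Set.Ico 0 S) t) →
        (∀ t ∈ Set.Ico (0:ℝ) S, HasDerivWithinAt u' (u'' t) (Set.Ico 0 S) t) →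
        ContinuousOn u'' (Set.Ico 0 S) →
        (∀ t ∈ Set.Ico (0:ℝ) S,
          ε • u'' t + ((1+t) ^ (-p)) • u' t + (⟪A (u t), u t⟫ ^ γ) • A (u t) = 0) →
        (∀ t ∈ Set.Ico (0:ℝ) S, 0 < ⟪A (u t), u t⟫) →
        (∀ t ∈ Set.Ico (0:ℝ) S,
          |⟪u' t, A (u t)⟫| / ⟪A (u t), u t⟫ ≤ K₀ / (1+t)) →
        (∀ t ∈ Set.Ico (0:ℝ) S,
          ⟪A (u t), u t⟫ ^ (γ-1) * ‖A (u t)‖ ^ 2 ≤ K₁ * (1+t) ^ (-(p+1))) →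
        ∀ t ∈ Set.Ico (0:ℝ) S,
          ‖u' t‖ ^ 2 * (1+t) ^ (1-p) / ⟪A (u t), u t⟫ ^ (γ+1) ≤
            max (4 * K₁) (‖u₁‖ ^ 2 / ⟪A u₀, u₀⟫ ^ (γ+1)) := by
  have hC : (0:ℝ) < (1 - p) + 2 * (γ + 1) * K₀ + 1 := by nlinarith
  refine ⟨1 / ((1 - p) + 2 * (γ + 1) * K₀ + 1), by positivity, ?_⟩
  intro ε hε hεle S hS u u' u'' hu0 hu'0 hu hu' _ heqn hpos hbK₀ hbK₁ t ht
  set M : ℝ := max (4 * K₁) (‖u₁‖ ^ 2 / ⟪A u₀, u₀⟫ ^ (γ+1)) with hM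
  -- the energy and its derivative
  set Q : ℝ → ℝ := fun x =>
    ‖u' x‖ ^ 2 * (1+x) ^ (1-p) / ⟪A (u x), u x⟫ ^ (γ+1) with hQdef
  set q : ℝ → ℝ := fun x =>
    ((2 * ⟪u'' x, u' x⟫ * (1+x) ^ (1-p)
        + ‖u' x‖ ^ 2 * ((1-p) * (1+x) ^ (-p))) * ⟪A (u x), u x⟫ ^ (γ+1)
      - ‖u' x‖ ^ 2 * (1+x) ^ (1-p)
        * (2 * ⟪A (u x), u' x⟫ * (γ+1) * ⟪A (u x), u x⟫ ^ γ))
    / (⟪A (u x), u x⟫ ^ (γ+1)) ^ 2 with hqdef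
  have hQd : ∀ x ∈ Set.Ico (0:ℝ) S, HasDerivWithinAt Q (q x) (Set.Ico 0 S) x := by
    intro x hx
    have h1x : (0:ℝ) < 1 + x := by linarith [hx.1]
    have hax0 : 0 < ⟪A (u x), u x⟫ := hpos x hx
    have hux := hu x hx
    have hu'x := hu' x hx
    have hAx : HasDerivWithinAt (fun t => A (u t)) (A (u' x)) (Set.Ico 0 S) x :=
      A.hasFDerivAt.comp_hasDerivWithinAt x hux
    have hax : HasDerivWithinAt (fun t => ⟪A (u t), u t⟫)
        (2 * ⟪A (u x), u' x⟫) (Set.Ico 0 S) x := by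
      have h := HasDerivWithinAt.inner ℝ hAx hux
      have e : ⟪A (u x), u' x⟫ + ⟪A (u' x), u x⟫ = 2 * ⟪A (u x), u' x⟫ := by
        rw [hA_sa (u' x) (u x), real_inner_comm (u' x) (A (u x))]
        ring
      exact h.congr_deriv e
    have hEx : HasDerivWithinAt (fun t => ‖u' t‖ ^ 2)
        (2 * ⟪u'' x, u' x⟫) (Set.Ico 0 S) x := by
      have h := HasDerivWithinAt.inner ℝ hu'x hu'x
      have heq2 : (fun t => ⟪u' t, u' t⟫) = fun t => ‖u' t‖ ^ 2 :=
        funext fun t => real_inner_self_eq_norm_sq _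
      rw [heq2] at h
      have e : ⟪u' x, u'' x⟫ + ⟪u'' x, u' x⟫ = 2 * ⟪u'' x, u' x⟫ := by
        rw [real_inner_comm (u' x) (u'' x)]
        ring
      exact h.congr_deriv e
    have hτx : HasDerivWithinAt (fun t : ℝ => (1+t) ^ (1-p))
        ((1-p) * (1+x) ^ (-p)) (Set.Ico 0 S) x := by
      have h : HasDerivAt (fun t : ℝ => 1 + t) 1 x := (hasDerivAt_id x).const_add 1
      have h2 := (h.hasDerivWithinAt (s := Set.Ico (0:ℝ) S)).rpow_const
        (p := 1-p) (Or.inl h1x.ne')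
      rw [(by ring : (1:ℝ) - p - 1 = -p)] at h2
      convert h2 using 1
      ring
    have hNx := hEx.mul hτx
    have hDx : HasDerivWithinAt (fun t => ⟪A (u t), u t⟫ ^ (γ+1))
        (2 * ⟪A (u x), u' x⟫ * (γ+1) * ⟪A (u x), u x⟫ ^ γ) (Set.Ico 0 S) x := by
      have h := hax.rpow_const (p := γ+1) (Or.inl hax0.ne')
      rw [(by ring : γ + 1 - 1 = γ)] at h
      exact h
    exact hNx.div hDx (ne_of_gt (rpow_pos_of_pos hax0 _))
  -- continuity of Q on [0, t]
  have hsub : Set.Icc (0:ℝ) t ⊆ Set.Ico 0 S := fun y hy =>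
    ⟨hy.1, lt_of_le_of_lt hy.2 ht.2⟩
  have hQc : ContinuousOn Q (Set.Icc 0 t) :=
    fun y hy => ((hQd y (hsub hy)).continuousWithinAt).mono hsub
  -- initial bound
  have hQ0 : Q 0 ≤ M := by
    have : Q 0 = ‖u₁‖ ^ 2 / ⟪A u₀, u₀⟫ ^ (γ+1) := by
      simp only [hQdef, hu0, hu'0]
      norm_num
    rw [this]
    exact le_max_right _ _
  -- fencing
  have main : ∀ x ∈ Set.Icc (0:ℝ) t, Q x ≤ M := by
    apply image_le_of_deriv_right_lt_deriv_boundary' (f' := q)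
      (B := fun _ => M) (B' := fun _ => (0:ℝ)) hQc
    · intro x hx
      have hx' : x ∈ Set.Ico (0:ℝ) S := ⟨hx.1, lt_trans hx.2 ht.2⟩
      refine (hQd x hx').mono_of_mem_nhdsWithin ?_
      refine mem_nhdsWithin.2 ⟨Set.Iio S, isOpen_Iio, hx'.2, fun y hy => ⟨?_, hy.1⟩⟩
      exact le_trans hx.1 hy.2
    · exact hQ0
    · exact continuousOn_const
    · exact fun x _ => hasDerivWithinAt_const x _ M
    · -- the key negativity
      intro x hx hQM
      have hx' : x ∈ Set.Ico (0:ℝ) S := ⟨hx.1, lt_trans hx.2 ht.2⟩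
      have h1x : (0:ℝ) < 1 + x := by linarith [hx.1]
      have hτ1 : (1:ℝ) ≤ 1 + x := by linarith [hx.1]
      have hax0 : 0 < ⟪A (u x), u x⟫ := hpos x hx'
      set a := ⟪A (u x), u x⟫ with hadef
      have hGpos : 0 < a ^ γ := rpow_pos_of_pos hax0 γ
      have hPpos : 0 < a ^ (γ+1) := rpow_pos_of_pos hax0 (γ+1)
      have hs0 : 0 < (1+x) ^ (-p) := rpow_pos_of_pos h1x _
      have hTτs : (1+x) ^ (1-p) = (1+x) * (1+x) ^ (-p) := by
        rw [(by ring : (1:ℝ) - p = 1 + (-p)), rpow_add h1x, rpow_one]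
      have hτs1 : (1:ℝ) ≤ (1+x) * (1+x) ^ (-p) := by
        rw [← hTτs]
        exact Real.one_le_rpow hτ1 (by linarith)
      have hGP : a ^ γ * a = a ^ (γ+1) := (rpow_add_one hax0.ne' γ).symm
      -- the PDE at x, tested against u'
      have heqx : ε * ⟪u'' x, u' x⟫ + (1+x) ^ (-p) * ‖u' x‖ ^ 2
          + a ^ γ * ⟪A (u x), u' x⟫ = 0 := by
        have h0 := heqn x hx'
        have h1 : ⟪ε • u'' x + ((1+x) ^ (-p)) • u' x + (a ^ γ) • A (u x), u' x⟫
            = (0:ℝ) := by rw [h0, inner_zero_left]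
        rw [inner_add_left, inner_add_left, real_inner_smul_left,
          real_inner_smul_left, real_inner_smul_left,
          real_inner_self_eq_norm_sq] at h1
        linarith [h1]
      -- the conditional bounds at x
      have hWτ : |⟪A (u x), u' x⟫| * (1+x) ≤ K₀ * a := by
        have h := hbK₀ x hx'
        rw [real_inner_comm (A (u x)) (u' x)] at h
        exact (div_le_div_iff₀ hax0 h1x).1 h
      have hA2 : (a ^ γ / a) * ‖A (u x)‖ ^ 2 ≤ K₁ * ((1+x) ^ (-p) / (1+x)) := by
        have h := hbK₁ x hx'
        rw [Real.rpow_sub hax0, Real.rpow_one,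
          (by ring : -(p+1) = -p - 1), Real.rpow_sub h1x, Real.rpow_one] at h
        exact h
      -- Q x = M
      have hQeq : ‖u' x‖ ^ 2 * ((1+x) * (1+x) ^ (-p)) = M * a ^ (γ+1) := by
        have h : ‖u' x‖ ^ 2 * (1+x) ^ (1-p) / a ^ (γ+1) = M := hQM
        rw [div_eq_iff hPpos.ne'] at h
        rw [← hTτs]
        exact h
      -- smallness of ε
      have hεC : ε * ((1 - p) + 2 * (γ + 1) * K₀ + 1) ≤ 1 := by
        have h := mul_le_mul_of_nonneg_right hεle hC.le
        calc ε * ((1 - p) + 2 * (γ + 1) * K₀ + 1)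
            ≤ 1 / ((1 - p) + 2 * (γ + 1) * K₀ + 1)
              * ((1 - p) + 2 * (γ + 1) * K₀ + 1) := h
          _ = 1 := by field_simp
      have key := key_neg (τ := 1+x) (s := (1+x) ^ (-p)) (a := a)
        (G := a ^ γ) (P := a ^ (γ+1)) (E := ‖u' x‖ ^ 2)
        (W := ⟪A (u x), u' x⟫) (nu := ‖u' x‖) (nA := ‖A (u x)‖)
        (c1 := 1-p) (c2 := γ+1) (T := (1+x) ^ (1-p)) (ip := ⟪u'' x, u' x⟫)
        (M := M) (ε := ε) (K₀ := K₀) (K₁ := K₁)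
        hτ1 hs0 hτs1 hax0 hGpos hPpos hGP hTτs hε hK₁ (le_max_left _ _)
        (by linarith) (by linarith) hK₀.le rfl (norm_nonneg _) (norm_nonneg _)
        (abs_real_inner_le_norm _ _) hWτ hA2 hQeq (by linarith [heqx]) hεC
      show q x < 0
      rw [hqdef]
      apply div_neg_of_neg_of_pos
      · linarith [key]
      · positivity
  exact main t ⟨ht.1, le_refl t⟩
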